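/- Let G_0 be a finite abelian group of order n_0, let n be a positive integer, and let A' be a nonempty finite subset of the group G_0 × ℤ^n whose projection to ℤ^n has cardinality k ≥ 2. Then for every integer r ≥ 2, the set A' is an asymptotic (r, n_0·k·b(r,k))-approximate group in G_0 × ℤ^n. -/

import Mathlib

open Pointwise

/-- The `h`-fold sumset `hA = {a₁ + ⋯ + a_h : aᵢ ∈ A}`. -/
def hsum {V : Type*} [AddCommMonoid V] (h : ℕ) (A : Set V) : Set V :=
  {z | ∃ f : Fin h → V, (∀ i, f i ∈ A) ∧ z = ∑ i, f i}

/-- The binomial coefficient `b(r,k) = C((r+1)(k-1)-1, k-1)`. -/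
def b (r k : ℕ) : ℕ := Nat.choose ((r + 1) * (k - 1) - 1) (k - 1)

private lemma multiset_card_finset_sum {ι α : Type*} (s : Finset ι) (g : ι → Multiset α) :
    Multiset.card (∑ i ∈ s, g i) = ∑ i ∈ s, Multiset.card (g i) := by
  classical
  induction s using Finset.cons_induction with
  | empty => simp
  | cons a s ha ih => simp [Finset.sum_cons, ih]

private lemma multiset_sum_finset_sum {ι α : Type*} [AddCommMonoid α] (s : Finset ι)
    (g : ι → Multiset α) : (∑ i ∈ s, g i).sum = ∑ i ∈ s, (g i).sum := by
  exact map_sum (Multiset.sumAddMonoidHom (M := α)) g s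

private lemma add_mem_hsum_succ {V : Type*} [AddCommMonoid V] {A : Set V} {h : ℕ} {x z : V}
    (hx : x ∈ A) (hz : z ∈ hsum h A) : x + z ∈ hsum (h + 1) A := by
  obtain ⟨f, hf, rfl⟩ := hz
  exact ⟨Fin.cons x f, fun i => Fin.cases hx hf i, (Fin.sum_cons x f).symm⟩

private lemma multiset_sum_mem_hsum {V : Type*} [AddCommMonoid V] {A : Set V} :
    ∀ {h : ℕ} (m : Multiset V), Multiset.card m = h → (∀ x ∈ m, x ∈ A) → m.sum ∈ hsum h A := by
  intro h
  induction h with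
  | zero =>
    intro m hc _
    rw [Multiset.card_eq_zero] at hc
    subst hc
    exact ⟨Fin.elim0, fun i => i.elim0, by simp⟩
  | succ h ih =>
    intro m hc hm
    have hpos : 0 < Multiset.card m := by omega
    obtain ⟨x, hx⟩ := Multiset.card_pos_iff_exists_mem.mp hpos
    obtain ⟨m', rfl⟩ := Multiset.exists_cons_of_mem hx
    rw [Multiset.sum_cons]
    have hc' : Multiset.card m' = h := by
      simp only [Multiset.card_cons] at hc; omega
    exact add_mem_hsum_succ (hm x hx) (ih m' hc' fun y hy => hm y (Multiset.mem_cons_of_mem hy))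

private lemma nsmul_sum_mem_hsum {V : Type*} [AddCommMonoid V] {A : Set V} {k h : ℕ}
    (e : Fin k → V) (he : ∀ i, e i ∈ A) (x : Fin k → ℕ) (hx : ∑ i, x i = h) :
    (∑ i, x i • e i) ∈ hsum h A := by
  classical
  have hcard : Multiset.card (∑ i, Multiset.replicate (x i) (e i)) = h := by
    rw [multiset_card_finset_sum]
    simp [Multiset.card_replicate, hx]
  have hmem : ∀ y ∈ (∑ i, Multiset.replicate (x i) (e i)), y ∈ A := by
    intro y hy
    rw [Multiset.mem_sum] at hy
    obtain ⟨i, _, hyi⟩ := hy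
    rw [Multiset.eq_of_mem_replicate hyi]
    exact he i
  have hsum' : (∑ i, Multiset.replicate (x i) (e i)).sum = ∑ i, x i • e i := by
    rw [multiset_sum_finset_sum]
    exact Finset.sum_congr rfl fun i _ => Multiset.sum_replicate _ _
  have := multiset_sum_mem_hsum _ hcard hmem
  rwa [hsum'] at this

private lemma card_antidiagonalTuple_le (k N : ℕ) :
    (Finset.Nat.antidiagonalTuple k N).card ≤ Nat.multichoose k N := by
  classical
  rw [← Sym.card_sym_fin_eq_multichoose, ← Finset.card_univ]
  have hcount : ∀ t : Fin k → ℕ, ∀ j : Fin k,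
      Multiset.count j (∑ i, Multiset.replicate (t i) i) = t j := by
    intro t j
    rw [Multiset.count_sum']
    simp only [Multiset.count_replicate]
    rw [Finset.sum_ite_eq' Finset.univ j t]
    simp
  calc (Finset.Nat.antidiagonalTuple k N).card
      ≤ ((Finset.univ : Finset (Sym (Fin k) N)).map
          ⟨Sym.toMultiset, Sym.coe_injective⟩).card := by
        apply Finset.card_le_card_of_injOn (fun t => ∑ i, Multiset.replicate (t i) i)
        · intro t ht
          rw [Finset.mem_coe, Finset.Nat.mem_antidiagonalTuple] at ht
          have hc : Multiset.card (∑ i, Multiset.replicate (t i) i) = N := by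
            rw [multiset_card_finset_sum]; simp [Multiset.card_replicate, ht]
          exact Finset.mem_map.mpr ⟨⟨_, hc⟩, Finset.mem_univ _, rfl⟩
        · intro t₁ _ t₂ _ hEq
          funext j
          rw [← hcount t₁ j, ← hcount t₂ j]
          exact congrArg (Multiset.count j) hEq
    _ = (Finset.univ : Finset (Sym (Fin k) N)).card := Finset.card_map _

/-- Let `G₀` be a finite abelian group of order `n₀` and let `A'` be a nonempty finite
subset of `G₀ × ℤⁿ` whose projection to `ℤⁿ` has `k ≥ 2` elements.  Then for every
`r ≥ 2`, the set `A'` is an asymptotic `(r, n₀·k·b(r,k))`-approximate group. -/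
theorem product_asymptotic_approximate_group {G₀ : Type*} [AddCommGroup G₀] [Fintype G₀]
    (n₀ : ℕ) (hn₀ : Fintype.card G₀ = n₀) (n : ℕ) (hn : 0 < n)
    (A' : Set (G₀ × (Fin n → ℤ))) (hA' : A'.Finite) (hne : A'.Nonempty)
    (k : ℕ) (hk : (Prod.snd '' A').ncard = k) (hk2 : 2 ≤ k)
    (r : ℕ) (hr : 2 ≤ r) :
    ∃ h₀ : ℕ, ∀ h : ℕ, h₀ ≤ h →
      ∃ X : Finset (G₀ × (Fin n → ℤ)), X.card ≤ n₀ * k * b r k ∧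
        hsum (r * h) A' ⊆ ↑X + hsum h A' := by
  classical
  haveI : NeZero k := ⟨by omega⟩
  -- enumeration of the projection
  have hBfin : (Prod.snd '' A').Finite := hA'.image _
  have hcard : hBfin.toFinset.card = k := by
    rw [← Set.ncard_eq_toFinset_card _ hBfin, hk]
  let e := Finset.equivFinOfCardEq hcard
  set a : Fin k → (Fin n → ℤ) := fun i => ((e.symm i : hBfin.toFinset) : Fin n → ℤ) with ha_def
  have ha : ∀ i, a i ∈ Prod.snd '' A' := fun i => hBfin.mem_toFinset.mp (e.symm i).2
  have hsurj : ∀ u ∈ Prod.snd '' A', ∃ i, a i = u := by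
    intro u hu
    refine ⟨e ⟨u, hBfin.mem_toFinset.mpr hu⟩, ?_⟩
    simp [ha_def]
  have hlift : ∀ i, ∃ p, p ∈ A' ∧ p.2 = a i := by
    intro i
    obtain ⟨p, hp, hpe⟩ := ha i
    exact ⟨p, hp, hpe⟩
  choose al hal1 hal2 using hlift
  obtain ⟨d, hkd⟩ : ∃ d, k = d + 1 := ⟨k - 1, by omega⟩
  have hd1 : 1 ≤ d := by omega
  refine ⟨r * k * k, fun h hh => ?_⟩
  set s : ℕ := h / d with hs_def
  have hds : d * s ≤ h := by
    rw [hs_def, mul_comm]; exact Nat.div_mul_le_self h d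
  have hsrd : r * d ≤ s := by
    rw [hs_def, Nat.le_div_iff_mul_le (by omega : 0 < d)]
    calc r * d * d ≤ r * k * k := by
          apply Nat.mul_le_mul (Nat.mul_le_mul_left r (by omega)) (by omega)
      _ ≤ h := hh
  have hs1 : 1 ≤ s := le_trans (by nlinarith : 1 ≤ r * d) hsrd
  have hhlt : h < d * s + d := by
    have h1 : d * s + h % d = h := by rw [hs_def]; exact Nat.div_add_mod h d
    have h2 : h % d < d := Nat.mod_lt h (by omega)
    omega
  -- the covering set
  set ζ : (Fin k → ℕ) → (Fin n → ℤ) := fun t =>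
    ((r : ℤ) * h - h - s * ∑ i ∈ Finset.univ.erase 0, (t i : ℤ)) • a 0
      + ∑ i ∈ Finset.univ.erase 0, ((s : ℤ) * t i) • a i with hζ_def
  refine ⟨(Finset.univ : Finset G₀) ×ˢ (Finset.Nat.antidiagonalTuple k (r * d)).image ζ,
    ?_, ?_⟩
  · -- cardinality bound
    rw [Finset.card_product, Finset.card_univ, hn₀]
    have h1 : ((Finset.Nat.antidiagonalTuple k (r * d)).image ζ).card ≤
        Nat.choose (r * d + d) d := by
      calc ((Finset.Nat.antidiagonalTuple k (r * d)).image ζ).card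
          ≤ (Finset.Nat.antidiagonalTuple k (r * d)).card := Finset.card_image_le
        _ ≤ Nat.multichoose k (r * d) := card_antidiagonalTuple_le _ _
        _ = Nat.choose (k + r * d - 1) (r * d) := Nat.multichoose_eq _ _
        _ = Nat.choose (r * d + d) (r * d) := by congr 1; omega
        _ = Nat.choose (r * d + d) d := by
            rw [← Nat.choose_symm (by omega : r * d ≤ r * d + d)]
            congr 1; omega
    have h2 : Nat.choose (r * d + d) d ≤ k * b r k := by
      have hb : b r k = Nat.choose ((r + 1) * d - 1) d := by
        rw [b]
        have hkd' : k - 1 = d := by omega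
        rw [hkd']
      obtain ⟨d', rfl⟩ : ∃ d', d = d' + 1 := ⟨d - 1, by omega⟩
      set m : ℕ := (r + 1) * (d' + 1) - 1 with hm_def
      have hm1 : r * (d' + 1) + (d' + 1) = m + 1 := by
        have : (r + 1) * (d' + 1) = r * (d' + 1) + (d' + 1) := by ring
        omega
      have hm2 : 3 * (d' + 1) ≤ (r + 1) * (d' + 1) :=
        Nat.mul_le_mul_right _ (by omega)
      rw [hm1, hb]
      have hpascal : Nat.choose (m + 1) (d' + 1) =
          Nat.choose m d' + Nat.choose m (d' + 1) := Nat.choose_succ_succ m d'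
      have hhalf : d' < m / 2 := by
        have : d' + 1 ≤ m / 2 := (Nat.le_div_iff_mul_le (by norm_num)).mpr (by omega)
        omega
      have hmono : Nat.choose m d' ≤ Nat.choose m (d' + 1) :=
        Nat.choose_le_succ_of_lt_half_left hhalf
      calc Nat.choose (m + 1) (d' + 1) ≤ 2 * Nat.choose m (d' + 1) := by omega
        _ ≤ k * Nat.choose m (d' + 1) := Nat.mul_le_mul_right _ (by omega)
    calc n₀ * ((Finset.Nat.antidiagonalTuple k (r * d)).image ζ).card
        ≤ n₀ * (k * b r k) := Nat.mul_le_mul_left n₀ (le_trans h1 h2)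
      _ = n₀ * k * b r k := by ring
  · -- covering
    intro ξ hξ
    obtain ⟨f, hfA, rfl⟩ := hξ
    choose c hc using fun j => hsurj (f j).2 ⟨f j, hfA j, rfl⟩
    set y : Fin k → ℕ := fun i => (Finset.univ.filter fun j => c j = i).card with hy_def
    have hysum : ∑ i, y i = r * h := by
      rw [hy_def, ← Finset.card_eq_sum_card_fiberwise (fun j _ => Finset.mem_univ (c j)),
        Finset.card_univ, Fintype.card_fin]
    have hξ2 : (∑ j, f j).2 = ∑ i, y i • a i := by
      rw [Prod.snd_sum, ← Finset.sum_fiberwise Finset.univ c (fun j => (f j).2)]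
      refine Finset.sum_congr rfl fun i _ => ?_
      rw [show ∑ j ∈ Finset.univ.filter (fun j => c j = i), (f j).2
          = ∑ j ∈ Finset.univ.filter (fun j => c j = i), a i from
        Finset.sum_congr rfl fun j hj => by
          rw [← hc j, (Finset.mem_filter.mp hj).2]]
      rw [Finset.sum_const]
    set S : ℕ := ∑ i ∈ Finset.univ.erase 0, y i % s with hS_def
    have hScard : (Finset.univ.erase (0 : Fin k)).card = d := by
      rw [Finset.card_erase_of_mem (Finset.mem_univ _), Finset.card_univ, Fintype.card_fin]
      omega
    have hSle : S ≤ d * s := by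
      calc S ≤ (Finset.univ.erase (0 : Fin k)).card • s :=
            Finset.sum_le_card_nsmul _ _ s fun i _ => le_of_lt (Nat.mod_lt _ (by omega))
        _ = d * s := by rw [hScard, smul_eq_mul]
    have hSh : S ≤ h := le_trans hSle hds
    set x : Fin k → ℕ := fun i => if i = 0 then h - S else y i % s with hx_def
    have hxsum : ∑ i, x i = h := by
      rw [← Finset.add_sum_erase _ x (Finset.mem_univ 0)]
      have : ∑ i ∈ Finset.univ.erase 0, x i = S := by
        rw [hS_def]
        exact Finset.sum_congr rfl fun i hi => by
          simp only [hx_def]; simp [Finset.mem_erase.mp hi |>.1]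
      rw [this]
      simp only [hx_def, if_pos rfl]
      omega
    set v : Fin k → ℕ := fun i => y i / s with hv_def
    have hvle : ∑ i ∈ Finset.univ.erase 0, v i ≤ r * d := by
      have h2 : s * ∑ i ∈ Finset.univ.erase 0, v i ≤ ∑ i ∈ Finset.univ.erase 0, y i := by
        rw [Finset.mul_sum]
        exact Finset.sum_le_sum fun i _ => by
          rw [hv_def, mul_comm]; exact Nat.div_mul_le_self _ _
      have h3 : ∑ i ∈ Finset.univ.erase 0, y i ≤ r * h := by
        rw [← hysum]
        exact Finset.sum_le_sum_of_subset (Finset.subset_univ _)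
      have h4 : r * h < s * (r * d + 1) := by nlinarith [hhlt, hsrd]
      have : s * ∑ i ∈ Finset.univ.erase 0, v i < s * (r * d + 1) := by omega
      exact Nat.lt_succ_iff.mp (Nat.lt_of_mul_lt_mul_left this)
    set t : Fin k → ℕ := fun i =>
      if i = 0 then r * d - ∑ j ∈ Finset.univ.erase 0, v j else v i with ht_def
    have hterase : ∀ i ∈ Finset.univ.erase (0 : Fin k), t i = v i := by
      intro i hi
      simp only [ht_def]; simp [Finset.mem_erase.mp hi |>.1]
    have htmem : t ∈ Finset.Nat.antidiagonalTuple k (r * d) := by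
      rw [Finset.Nat.mem_antidiagonalTuple, ← Finset.add_sum_erase _ t (Finset.mem_univ 0)]
      rw [Finset.sum_congr rfl hterase]
      have ht0 : t 0 = r * d - ∑ j ∈ Finset.univ.erase 0, v j := by simp [ht_def]
      rw [ht0]
      exact Nat.sub_add_cancel hvle
    set w : G₀ × (Fin n → ℤ) := ∑ i, x i • al i with hw_def
    have hwmem : w ∈ hsum h A' := nsmul_sum_mem_hsum al hal1 x hxsum
    -- membership of the remainder in X
    have hXmem : (∑ j, f j) - w ∈
        ((Finset.univ : Finset G₀) ×ˢ (Finset.Nat.antidiagonalTuple k (r * d)).image ζ :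
          Finset (G₀ × (Fin n → ℤ))) := by
      rw [Finset.mem_product]
      refine ⟨Finset.mem_univ _, Finset.mem_image.mpr ⟨t, htmem, ?_⟩⟩
      -- ζ t = ((∑ j, f j) - w).2
      have hw2 : w.2 = ∑ i, x i • a i := by
        rw [hw_def, Prod.snd_sum]
        exact Finset.sum_congr rfl fun i _ => by rw [Prod.smul_snd, hal2]
      have hsub : ((∑ j, f j) - w).2 = ∑ i, ((y i : ℤ) - (x i : ℤ)) • a i := by
        rw [Prod.snd_sub, hξ2, hw2, ← Finset.sum_sub_distrib]
        exact Finset.sum_congr rfl fun i _ => by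
          rw [sub_smul, natCast_zsmul, natCast_zsmul]
      rw [hsub]; simp only [hζ_def]
      rw [← Finset.add_sum_erase _ (fun i => ((y i : ℤ) - (x i : ℤ)) • a i) (Finset.mem_univ 0)]
      have hco : ∀ i ∈ Finset.univ.erase (0 : Fin k),
          ((y i : ℤ) - (x i : ℤ)) • a i = ((s : ℤ) * t i) • a i := by
        intro i hi
        have hi0 := (Finset.mem_erase.mp hi).1
        have h2 : t i = y i / s := hterase i hi
        have h3 : s * (y i / s) + y i % s = y i := Nat.div_add_mod (y i) s
        have h3' : (s : ℤ) * ((y i / s : ℕ) : ℤ) + ((y i % s : ℕ) : ℤ) = (y i : ℤ) := by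
          exact_mod_cast congrArg (fun z : ℕ => (z : ℤ)) h3
        have h1 : x i = y i % s := by simp only [hx_def]; simp [hi0]
        have : (y i : ℤ) - (x i : ℤ) = (s : ℤ) * t i := by
          rw [h1, h2]
          linarith
        rw [this]
      rw [Finset.sum_congr rfl hco]
      congr 1
      -- coefficient at 0
      have hx0 : (x 0 : ℤ) = (h : ℤ) - (S : ℤ) := by
        have hx0' : x 0 = h - S := by simp [hx_def]
        rw [hx0', Nat.cast_sub hSh]
      have hy0 : (y 0 : ℤ) + ∑ i ∈ Finset.univ.erase 0, (y i : ℤ) = (r : ℤ) * h := by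
        have h1 : y 0 + ∑ i ∈ Finset.univ.erase 0, y i = r * h := by
          rw [Finset.add_sum_erase _ y (Finset.mem_univ 0)]; exact hysum
        have := congrArg (fun z : ℕ => (z : ℤ)) h1
        push_cast at this
        convert this using 2
      have hsum1 : ∑ i ∈ Finset.univ.erase 0, (y i : ℤ)
          = (s : ℤ) * ∑ i ∈ Finset.univ.erase 0, (t i : ℤ) + (S : ℤ) := by
        rw [hS_def, Nat.cast_sum, Finset.mul_sum, ← Finset.sum_add_distrib]
        refine Finset.sum_congr rfl fun i hi => ?_
        have h2 : t i = y i / s := hterase i hi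
        have h3 : s * (y i / s) + y i % s = y i := Nat.div_add_mod (y i) s
        have h3' : (s : ℤ) * ((y i / s : ℕ) : ℤ) + ((y i % s : ℕ) : ℤ) = (y i : ℤ) := by
          exact_mod_cast congrArg (fun z : ℕ => (z : ℤ)) h3
        rw [h2]
        linarith
      have hc0 : ((y 0 : ℤ) - (x 0 : ℤ)) =
          (r : ℤ) * h - h - s * ∑ i ∈ Finset.univ.erase 0, (t i : ℤ) := by
        rw [hx0]
        have := hy0
        rw [hsum1] at this
        linarith
      rw [hc0]
    have hfinal := Set.add_mem_add (Finset.mem_coe.mpr hXmem) hwmem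
    simpa using hfinal
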